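/- Let A ∈ (c₀, c₀), i.e., A = (a_{nk}) is an infinite matrix with all rows in ℓ¹ such that Ax ∈ c₀ for every x ∈ c₀, and let L_A : c₀ → c₀ be the induced bounded linear operator. Then ‖L_A‖_χ = limsup_{n→∞} ‖A_n‖_{ℓ¹} = limsup_{n→∞} Σ_{k=0}^∞ |a_{nk}|, where ‖L_A‖_χ = χ(L_A(B_{c₀})) is the Hausdorff measure of noncompactness of the operator. In particular, L_A is compact if and only if lim_{n→∞} Σ_k |a_{nk}| = 0. -/

import Mathlib

open Filter

/-- The Banach space `c₀` of real null sequences with the supremum norm, realized as a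
(metric) subspace of `ℓ∞`. -/
abbrev c0Space : Type :=
  {x : lp (fun _ : ℕ => ℝ) (⊤ : ENNReal) // Tendsto (fun n => x n) atTop (nhds 0)}

namespace ChiAux

lemma memℓp_top_of_tendsto {f : ℕ → ℝ} (h : Tendsto f atTop (nhds 0)) :
    Memℓp f (⊤ : ENNReal) := by
  apply memℓp_infty
  have := (h.norm).bddAbove_range
  simpa using this

noncomputable def mk0 (f : ℕ → ℝ) (h : Tendsto f atTop (nhds 0)) : c0Space :=
  ⟨⟨f, memℓp_top_of_tendsto h⟩, h⟩

@[simp] lemma mk0_apply (f : ℕ → ℝ) (h : Tendsto f atTop (nhds 0)) (n : ℕ) :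
    (mk0 f h).1 n = f n := rfl

lemma apply_le_norm (x : lp (fun _ : ℕ => ℝ) (⊤ : ENNReal)) (n : ℕ) : |x n| ≤ ‖x‖ := by
  have := lp.norm_apply_le_norm ENNReal.top_ne_zero x n
  rwa [Real.norm_eq_abs] at this

lemma norm_le_of (x : lp (fun _ : ℕ => ℝ) (⊤ : ENNReal)) {C : ℝ} (hC : 0 ≤ C)
    (h : ∀ n, |x n| ≤ C) : ‖x‖ ≤ C :=
  lp.norm_le_of_forall_le hC (fun n => by rw [Real.norm_eq_abs]; exact h n)

variable {A : ℕ → ℕ → ℝ}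
variable (A) in
noncomputable def Mrow (n : ℕ) : ℝ := ∑' k, |A n k|

variable (A) in
def Qset : Set c0Space :=
  {y : c0Space | ∃ x : c0Space, ‖x.1‖ ≤ 1 ∧ ∀ n, y.1 n = ∑' k, A n k * x.1 k}

lemma Mrow_nonneg (n : ℕ) : 0 ≤ Mrow A n := tsum_nonneg fun k => abs_nonneg _

lemma summable_abs_mul (hrows : ∀ n, Summable fun k => |A n k|) (n : ℕ)
    (x : lp (fun _ : ℕ => ℝ) (⊤ : ENNReal)) :
    Summable fun k => |A n k * x k| := by
  refine Summable.of_nonneg_of_le (fun k => abs_nonneg _) (fun k => ?_)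
    ((hrows n).mul_right ‖x‖)
  rw [abs_mul]
  exact mul_le_mul_of_nonneg_left (apply_le_norm x k) (abs_nonneg _)

lemma summable_mul (hrows : ∀ n, Summable fun k => |A n k|) (n : ℕ)
    (x : lp (fun _ : ℕ => ℝ) (⊤ : ENNReal)) :
    Summable fun k => A n k * x k :=
  (summable_abs_mul hrows n x).of_abs

lemma abs_apply_le_of_mem (hrows : ∀ n, Summable fun k => |A n k|) {y : c0Space}
    (hy : y ∈ Qset A) (n : ℕ) : |y.1 n| ≤ Mrow A n := by
  obtain ⟨x, hx1, hxy⟩ := hy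
  rw [hxy n]
  have h1 : |∑' k, A n k * x.1 k| ≤ ∑' k, |A n k * x.1 k| := by
    have := norm_tsum_le_tsum_norm (f := fun k => A n k * x.1 k)
      (by simp only [Real.norm_eq_abs]; exact summable_abs_mul hrows n x.1)
    simp only [Real.norm_eq_abs] at this
    exact this
  refine h1.trans (Summable.tsum_le_tsum (fun k => ?_) (summable_abs_mul hrows n x.1) (hrows n))
  rw [abs_mul]
  calc |A n k| * |x.1 k| ≤ |A n k| * 1 :=
        mul_le_mul_of_nonneg_left ((apply_le_norm x.1 k).trans hx1) (abs_nonneg _)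
    _ = |A n k| := mul_one _

lemma exists_big (hrows : ∀ n, Summable fun k => |A n k|)
    (hmap : ∀ x : c0Space, Tendsto (fun n => ∑' k, A n k * x.1 k) atTop (nhds 0))
    (n : ℕ) {δ : ℝ} (hδ : 0 < δ) :
    ∃ y ∈ Qset A, Mrow A n - δ ≤ y.1 n := by
  obtain ⟨K, hK⟩ : ∃ K, Mrow A n - δ < ∑ k ∈ Finset.range K, |A n k| := by
    have h1 := (hrows n).hasSum.tendsto_sum_nat
    exact (h1.eventually (eventually_gt_nhds (sub_lt_self _ hδ))).exists
  set xf : ℕ → ℝ := fun k => if k < K then (if 0 ≤ A n k then 1 else -1) else 0 with hxf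
  have hx0 : Tendsto xf atTop (nhds 0) := by
    refine tendsto_const_nhds.congr' ?_
    filter_upwards [eventually_ge_atTop K] with k hk
    simp [hxf, Nat.not_lt.2 hk]
  set x := mk0 xf hx0 with hxdef
  have hx1 : ‖x.1‖ ≤ 1 := by
    refine norm_le_of _ zero_le_one fun k => ?_
    show |xf k| ≤ 1
    simp only [hxf]
    split_ifs <;> simp
  have hy0 : Tendsto (fun m => ∑' k, A m k * x.1 k) atTop (nhds 0) := hmap x
  refine ⟨mk0 _ hy0, ⟨x, hx1, fun m => rfl⟩, ?_⟩
  have hval : (mk0 _ hy0).1 n = ∑ k ∈ Finset.range K, |A n k| := by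
    rw [mk0_apply]
    have hsupp : ∀ k ∉ Finset.range K, A n k * x.1 k = 0 := by
      intro k hk
      rw [Finset.mem_range, not_lt] at hk
      show A n k * xf k = 0
      simp [hxf, Nat.not_lt.2 hk]
    rw [tsum_eq_sum hsupp]
    refine Finset.sum_congr rfl fun k hk => ?_
    rw [Finset.mem_range] at hk
    show A n k * xf k = |A n k|
    simp only [hxf, if_pos hk]
    split_ifs with h
    · rw [mul_one, abs_of_nonneg h]
    · rw [abs_of_neg (lt_of_not_ge h)]; ring
  rw [hval]
  linarith

lemma isClosed_c0 :
    IsClosed {x : lp (fun _ : ℕ => ℝ) (⊤ : ENNReal) | Tendsto (fun n => x n) atTop (nhds 0)} := by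
  refine isClosed_of_closure_subset fun x hx => ?_
  show Tendsto (fun n => x n) atTop (nhds 0)
  rw [Metric.tendsto_atTop]
  intro ε hε
  obtain ⟨y, hy, hxy⟩ := Metric.mem_closure_iff.mp hx (ε / 2) (by positivity)
  obtain ⟨N, hN⟩ := (Metric.tendsto_atTop.mp hy) (ε / 2) (by positivity)
  refine ⟨N, fun n hn => ?_⟩
  have h1 : |x n - y n| ≤ dist x y := by
    have h := apply_le_norm (x - y) n
    rw [dist_eq_norm]
    simp only [lp.coeFn_sub, Pi.sub_apply] at h
    exact h
  have h2 := hN n hn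
  rw [Real.dist_eq, sub_zero] at h2 ⊢
  calc |x n| = |(x n - y n) + y n| := by ring_nf
    _ ≤ |x n - y n| + |y n| := abs_add_le _ _
    _ < ε / 2 + ε / 2 := add_lt_add (lt_of_le_of_lt h1 hxy) h2
    _ = ε := by ring

end ChiAux

namespace ChiAux

variable {A : ℕ → ℕ → ℝ}

lemma exists_net (hrows : ∀ n, Summable fun k => |A n k|) {C b : ℝ}
    (hC : ∀ n, Mrow A n ≤ C) (hb : 0 < b) (m : ℕ)
    (hbm : ∀ n, m ≤ n → Mrow A n < b) :
    ∃ S : Finset c0Space, ∀ y ∈ Qset A, ∃ s ∈ S, dist y s ≤ b := by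
  have hC0 : 0 ≤ C := (Mrow_nonneg 0).trans (hC 0)
  have hcube : IsCompact (Set.Icc (fun _ : Fin m => -C) (fun _ => C)) := isCompact_Icc
  obtain ⟨t, htf, hts⟩ := (Metric.totallyBounded_iff.mp hcube.totallyBounded) b hb
  have he0 : ∀ v : Fin m → ℝ,
      Tendsto (fun n => if h : n < m then v ⟨n, h⟩ else 0) atTop (nhds 0) := by
    intro v
    refine tendsto_const_nhds.congr' ?_
    filter_upwards [eventually_ge_atTop m] with k hk
    simp [Nat.not_lt.2 hk]
  set e : (Fin m → ℝ) → c0Space := fun v => mk0 _ (he0 v) with he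
  refine ⟨(htf.image e).toFinset, fun y hy => ?_⟩
  have hyK : (fun i : Fin m => y.1 i) ∈ Set.Icc (fun _ : Fin m => -C) (fun _ => C) := by
    constructor <;> intro i <;>
      have := (abs_le.mp ((abs_apply_le_of_mem hrows hy i).trans (hC i)))
    · exact this.1
    · exact this.2
  obtain ⟨v, hv, hdv⟩ := Set.mem_iUnion₂.mp (hts hyK)
  rw [Metric.mem_ball] at hdv
  refine ⟨e v, by simp [Set.Finite.mem_toFinset]; exact ⟨v, hv, rfl⟩, ?_⟩
  rw [Subtype.dist_eq, dist_eq_norm]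
  refine norm_le_of _ hb.le fun k => ?_
  have hsub : (y.1 - (e v).1) k = y.1 k - (e v).1 k := by
    simp [lp.coeFn_sub]
  rw [hsub]
  by_cases hkm : k < m
  · have h1 : (e v).1 k = v ⟨k, hkm⟩ := by
      show (if h : k < m then v ⟨k, h⟩ else 0) = v ⟨k, hkm⟩
      rw [dif_pos hkm]
    rw [h1]
    have h2 := dist_le_pi_dist (fun i : Fin m => y.1 i) v ⟨k, hkm⟩
    rw [Real.dist_eq] at h2
    exact h2.trans hdv.le
  · have h1 : (e v).1 k = 0 := by
      show (if h : k < m then v ⟨k, h⟩ else 0) = 0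
      rw [dif_neg hkm]
    rw [h1, sub_zero]
    exact (abs_apply_le_of_mem hrows hy k).trans (hbm k (Nat.not_lt.1 hkm)).le

end ChiAux

/-- The Hausdorff measure of noncompactness:
`χ(Q) = inf {ε > 0 : Q has a finite ε-net in X}`. -/
noncomputable def hausdorffMNC {X : Type*} [MetricSpace X] (Q : Set X) : ℝ :=
  sInf {ε : ℝ | 0 < ε ∧ ∃ S : Finset X, ∀ x ∈ Q, ∃ s ∈ S, dist x s < ε}
open Filter

namespace ChiAux

noncomputable def zc : c0Space :=
  ⟨0, by simp only [lp.coeFn_zero, Pi.zero_apply]; exact tendsto_const_nhds⟩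

lemma dist_zc (y : c0Space) : dist y zc = ‖y.1‖ := by
  rw [Subtype.dist_eq, dist_eq_norm]
  show ‖y.1 - 0‖ = ‖y.1‖
  rw [sub_zero]

lemma abs_sub_apply_le_dist (y s : c0Space) (n : ℕ) : |y.1 n - s.1 n| ≤ dist y s := by
  rw [Subtype.dist_eq, dist_eq_norm]
  have h := apply_le_norm (y.1 - s.1) n
  simp only [lp.coeFn_sub, Pi.sub_apply] at h
  exact h

lemma main (A : ℕ → ℕ → ℝ)
    (hrows : ∀ n, Summable fun k => |A n k|)
    (hmap : ∀ x : c0Space, Tendsto (fun n => ∑' k, A n k * x.1 k) atTop (nhds 0)) :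
    hausdorffMNC (Qset A) = limsup (Mrow A) atTop ∧
    (IsCompact (closure (Qset A)) ↔ Tendsto (Mrow A) atTop (nhds 0)) := by
  classical
  set M : ℕ → ℝ := Mrow A with hMdef
  set Q : Set c0Space := Qset A with hQdef
  set NS : Set ℝ := {ε : ℝ | 0 < ε ∧ ∃ S : Finset c0Space, ∀ x ∈ Q, ∃ s ∈ S, dist x s < ε}
    with hNS
  have hMNC : hausdorffMNC Q = sInf NS := rfl
  have hM0 : ∀ n, 0 ≤ M n := fun n => Mrow_nonneg n
  have hNSbdd : BddBelow NS := ⟨0, fun ε hε => hε.1.le⟩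
  by_cases hbdd : BddAbove (Set.range M)
  · obtain ⟨C, hCub⟩ := hbdd
    have hC : ∀ n, M n ≤ C := fun n => hCub ⟨n, rfl⟩
    have hC0 : 0 ≤ C := (hM0 0).trans (hC 0)
    have hBle : IsBoundedUnder (· ≤ ·) atTop M := isBoundedUnder_of ⟨C, hC⟩
    have hBge : IsBoundedUnder (· ≥ ·) atTop M := isBoundedUnder_of ⟨0, hM0⟩
    set L := limsup M atTop with hL
    have hL0 : 0 ≤ L := le_limsup_of_frequently_le (Frequently.of_forall hM0) hBle
    have hQbound : ∀ y ∈ Q, dist y zc ≤ C := fun y hy => by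
      rw [dist_zc]
      exact norm_le_of _ hC0 fun n => (abs_apply_le_of_mem hrows hy n).trans (hC n)
    have hNSne : NS.Nonempty :=
      ⟨C + 1, by positivity, {zc}, fun y hy =>
        ⟨zc, Finset.mem_singleton_self zc, (hQbound y hy).trans_lt (by linarith)⟩⟩
    have h1 : hausdorffMNC Q ≤ L := by
      rw [hMNC]
      refine le_of_forall_gt_imp_ge_of_dense fun c hc => ?_
      have hc0 : 0 < c := lt_of_le_of_lt hL0 hc
      set b := (L + c) / 2 with hb
      have hLb : L < b := by rw [hb]; linarith
      have hbc : b < c := by rw [hb]; linarith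
      have hb0 : 0 < b := lt_of_le_of_lt hL0 hLb
      obtain ⟨m, hm⟩ := eventually_atTop.mp (eventually_lt_of_limsup_lt hLb hBle)
      obtain ⟨S, hS⟩ := exists_net hrows hC hb0 m fun n hn => hm n hn
      exact csInf_le hNSbdd
        ⟨hc0, S, fun y hy => (hS y hy).imp fun s hs => ⟨hs.1, hs.2.trans_lt hbc⟩⟩
    have h2 : L ≤ hausdorffMNC Q := by
      rw [hMNC]
      refine le_csInf hNSne fun ε hε => ?_
      obtain ⟨hε0, S, hS⟩ := hε
      refine le_of_forall_pos_le_add fun δ hδ => ?_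
      have hev : ∀ᶠ n in atTop, ∀ s ∈ S, |s.1 n| < δ / 3 := by
        rw [eventually_all_finset]
        intro s hs
        obtain ⟨N, hN⟩ := Metric.tendsto_atTop.mp s.2 (δ / 3) (by positivity)
        filter_upwards [eventually_ge_atTop N] with n hn
        have := hN n hn
        rwa [Real.dist_eq, sub_zero] at this
      refine limsup_le_of_le hBge.isCoboundedUnder_le ?_
      filter_upwards [hev] with n hn
      obtain ⟨y, hyQ, hy⟩ := exists_big hrows hmap n (show (0:ℝ) < δ / 3 by positivity)
      obtain ⟨s, hsS, hds⟩ := hS y hyQ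
      have hd := abs_sub_apply_le_dist y s n
      have hsn := hn s hsS
      have htri : y.1 n ≤ |y.1 n - s.1 n| + |s.1 n| :=
        calc y.1 n ≤ |y.1 n| := le_abs_self _
          _ = |(y.1 n - s.1 n) + s.1 n| := by congr 1; ring
          _ ≤ _ := abs_add_le _ _
      have : Mrow A n - δ / 3 ≤ y.1 n := hy
      linarith
    have hLeq : hausdorffMNC Q = L := le_antisymm h1 h2
    refine ⟨hLeq, ?_⟩
    constructor
    · intro hcpt
      have htb : TotallyBounded Q := hcpt.totallyBounded.subset subset_closure
      have hLz : L = 0 := by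
        refine le_antisymm ?_ hL0
        refine le_of_forall_gt_imp_ge_of_dense fun c hc => ?_
        obtain ⟨t, htf, hts⟩ := Metric.totallyBounded_iff.mp htb c hc
        have hmem : c ∈ NS := by
          refine ⟨hc, htf.toFinset, fun y hy => ?_⟩
          obtain ⟨s, hs, hd⟩ := Set.mem_iUnion₂.mp (hts hy)
          exact ⟨s, htf.mem_toFinset.mpr hs, Metric.mem_ball.mp hd⟩
        calc L = hausdorffMNC Q := hLeq.symm
          _ ≤ c := by rw [hMNC]; exact csInf_le hNSbdd hmem
      have hlinf : liminf M atTop = 0 := by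
        refine le_antisymm ?_ (le_liminf_of_le hBle.isCoboundedUnder_ge
          (Eventually.of_forall hM0))
        calc liminf M atTop ≤ limsup M atTop := liminf_le_limsup hBle hBge
          _ = 0 := hLz
      exact tendsto_of_liminf_eq_limsup hlinf hLz hBle hBge
    · intro htend
      have hLz : L = 0 := htend.limsup_eq
      haveI : CompleteSpace c0Space := isClosed_c0.completeSpace_coe
      rw [isCompact_iff_totallyBounded_isComplete]
      refine ⟨TotallyBounded.closure ?_, isClosed_closure.isComplete⟩
      rw [Metric.totallyBounded_iff]
      intro ε hε
      have hlt : sInf NS < ε := by rw [← hMNC, hLeq, hLz]; exact hε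
      obtain ⟨ε', ⟨hε'0, S, hS⟩, hε'ε⟩ := exists_lt_of_csInf_lt hNSne hlt
      refine ⟨(S : Set c0Space), S.finite_toSet, fun y hy => ?_⟩
      obtain ⟨s, hsS, hd⟩ := hS y hy
      exact Set.mem_iUnion₂.mpr ⟨s, hsS, Metric.mem_ball.mpr (hd.trans hε'ε)⟩
  · have hMlarge : ∀ R : ℝ, ∃ n, R < M n := by
      intro R
      by_contra h
      push_neg at h
      exact hbdd ⟨R, by rintro _ ⟨n, rfl⟩; exact h n⟩
    have hlimsup : limsup M atTop = 0 := by
      rw [limsup_eq]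
      convert Real.sInf_empty using 2
      · rfl
      rw [Set.eq_empty_iff_forall_notMem]
      intro a ha
      have ha' : ∀ᶠ n in atTop, M n ≤ a := ha
      rw [eventually_atTop] at ha'
      obtain ⟨N, hN⟩ := ha'
      refine hbdd ?_
      have hsub : Set.range M ⊆ (M '' Set.Iic N) ∪ {x | x ≤ a} := by
        rintro _ ⟨n, rfl⟩
        rcases le_or_gt n N with h | h
        · exact Or.inl ⟨n, h, rfl⟩
        · exact Or.inr (hN n h.le)
      exact BddAbove.mono hsub ((((Set.finite_Iic N).image M).bddAbove).union
        ⟨a, fun x hx => hx⟩)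
    have hNSempty : NS = ∅ := by
      rw [Set.eq_empty_iff_forall_notMem]
      rintro ε ⟨hε0, S, hS⟩
      obtain ⟨R, hR⟩ := (S.image fun s => ‖s.1‖).exists_le
      obtain ⟨n, hn⟩ := hMlarge (R + ε + 1)
      obtain ⟨y, hyQ, hy⟩ := exists_big hrows hmap n one_pos
      obtain ⟨s, hsS, hds⟩ := hS y hyQ
      have h1 := abs_sub_apply_le_dist y s n
      have h2 : ‖s.1‖ ≤ R := hR _ (Finset.mem_image_of_mem _ hsS)
      have h3 : |s.1 n| ≤ R := (apply_le_norm s.1 n).trans h2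
      have htri : y.1 n ≤ |y.1 n - s.1 n| + |s.1 n| :=
        calc y.1 n ≤ |y.1 n| := le_abs_self _
          _ = |(y.1 n - s.1 n) + s.1 n| := by congr 1; ring
          _ ≤ _ := abs_add_le _ _
      have : Mrow A n - 1 ≤ y.1 n := hy
      have hMn : R + ε + 1 < M n := hn
      linarith
    have hχ : hausdorffMNC Q = 0 := by rw [hMNC, hNSempty]; exact Real.sInf_empty
    refine ⟨by rw [hχ, hlimsup], ?_⟩
    have hnot1 : ¬ IsCompact (closure Q) := by
      intro hcpt
      obtain ⟨r, hr⟩ := hcpt.isBounded.subset_closedBall zc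
      obtain ⟨n, hn⟩ := hMlarge (r + 1)
      obtain ⟨y, hyQ, hy⟩ := exists_big hrows hmap n one_pos
      have hd : dist y zc ≤ r := Metric.mem_closedBall.mp (hr (subset_closure hyQ))
      rw [dist_zc] at hd
      have hb : y.1 n ≤ r := (le_abs_self _).trans ((apply_le_norm y.1 n).trans hd)
      have : Mrow A n - 1 ≤ y.1 n := hy
      have hMn : r + 1 < M n := hn
      linarith
    have hnot2 : ¬ Tendsto M atTop (nhds 0) := fun h => hbdd h.bddAbove_range
    exact iff_of_false hnot1 hnot2

end ChiAux


/-- For `A ∈ (c₀, c₀)`, the Hausdorff measure of noncompactness of the induced operator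
`L_A` satisfies `‖L_A‖_χ = χ(L_A(B_{c₀})) = limsup_n ∑_k |a_{nk}|`; in particular `L_A`
is compact (its image of the unit ball is relatively compact) iff `lim_n ∑_k |a_{nk}| = 0`. -/
theorem chi_matrix_operator_c0_c0 (A : ℕ → ℕ → ℝ)
    (hrows : ∀ n, Summable fun k => |A n k|)
    (hmap : ∀ x : c0Space, Tendsto (fun n => ∑' k, A n k * x.1 k) atTop (nhds 0)) :
    hausdorffMNC {y : c0Space | ∃ x : c0Space, ‖x.1‖ ≤ 1 ∧
        ∀ n, y.1 n = ∑' k, A n k * x.1 k} =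
      limsup (fun n => ∑' k, |A n k|) atTop ∧
    (IsCompact (closure {y : c0Space | ∃ x : c0Space, ‖x.1‖ ≤ 1 ∧
        ∀ n, y.1 n = ∑' k, A n k * x.1 k}) ↔
      Tendsto (fun n => ∑' k, |A n k|) atTop (nhds 0)) := by
  have h := ChiAux.main A hrows hmap
  exact ⟨h.1, h.2⟩
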